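/- If η.P ∼ Q‖Q' in microCCS with Q ≁ 0 and Q' ≁ 0, then there exist a process A and an integer k > 1 such that η.P ∼ (η.A)^k and η.A is in normal form with respect to the distribution-law rewriting. -/

import Mathlib

/-- CCS visible actions: a name `a` or a coname `ā`. -/
inductive Act where
  | inp : ℕ → Act
  | out : ℕ → Act
deriving DecidableEq

/-- The coaction. -/
def Act.co : Act → Act
  | .inp a => .out a
  | .out a => .inp a

/-- MicroCCS processes: nil, prefix, parallel composition. -/
inductive Proc where
  | nil : Proc
  | pre : Act → Proc → Proc
  | par : Proc → Proc → Proc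
deriving DecidableEq

/-- Transition labels: a visible action or τ. -/
inductive Lab where
  | act : Act → Lab
  | tau : Lab
deriving DecidableEq

/-- The standard CCS labelled transition system on microCCS. -/
inductive Step : Proc → Lab → Proc → Prop where
  | pre (η : Act) (P : Proc) : Step (.pre η P) (.act η) P
  | syn {P P' Q Q' : Proc} {η : Act} :
      Step P (.act η) P' → Step Q (.act η.co) Q' →
      Step (.par P Q) .tau (.par P' Q')
  | parL {P P' : Proc} {μ : Lab} (Q : Proc) :
      Step P μ P' → Step (.par P Q) μ (.par P' Q)
  | parR {Q Q' : Proc} {μ : Lab} (P : Proc) :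
      Step Q μ Q' → Step (.par P Q) μ (.par P Q')

/-- A (symmetric) bisimulation. -/
def IsBisim (R : Proc → Proc → Prop) : Prop :=
  (∀ P Q, R P Q → R Q P) ∧
  ∀ P Q μ P', R P Q → Step P μ P' → ∃ Q', Step Q μ Q' ∧ R P' Q'

/-- Strong bisimilarity: the union of all bisimulations. -/
def Bisim (P Q : Proc) : Prop := ∃ R, IsBisim R ∧ R P Q

/-- The size of a process: its number of prefixes. -/
def Proc.size : Proc → ℕ
  | .nil => 0
  | .pre _ P => 1 + P.size
  | .par P Q => P.size + Q.size

/-- Structural congruence: abelian monoid laws for parallel composition. -/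
inductive SC : Proc → Proc → Prop where
  | refl (P) : SC P P
  | symm : SC P Q → SC Q P
  | trans : SC P Q → SC Q R → SC P R
  | comm (P Q) : SC (.par P Q) (.par Q P)
  | assoc (P Q R) : SC (.par P (.par Q R)) (.par (.par P Q) R)
  | unit (P) : SC (.par P .nil) P
  | pre (η) : SC P Q → SC (.pre η P) (.pre η Q)
  | par : SC P P' → SC Q Q' → SC (.par P Q) (.par P' Q')

/-- `pow P k` is the k-fold parallel composition of `P`. -/
def pow (P : Proc) : ℕ → Proc
  | 0 => .nil
  | n+1 => .par P (pow P n)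

/-- One step of rewriting with the distribution law
    `η.(P ‖ (η.P)^k) ⇝ (η.P)^{k+1}` (k ≥ 1), modulo structural
    congruence, in any context. -/
inductive RW : Proc → Proc → Prop where
  | head {η : Act} {P : Proc} {k : ℕ} (hk : 1 ≤ k) :
      RW (.pre η (.par P (pow (.pre η P) k))) (pow (.pre η P) (k+1))
  | pre (η) : RW P P' → RW (.pre η P) (.pre η P')
  | parL (Q) : RW P P' → RW (.par P Q) (.par P' Q)
  | parR (P) : RW Q Q' → RW (.par P Q) (.par P Q')
  | congr : SC P P₁ → RW P₁ P₂ → SC P₂ P' → RW P P'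

/-- Reflexive-transitive closure of the distribution rewriting. -/
def Rws : Proc → Proc → Prop := Relation.ReflTransGen RW

/-- Normal forms for the distribution rewriting. -/
def NF (P : Proc) : Prop := ¬ ∃ P', RW P P'

/-- Prime processes. -/
def IsPrime (P : Proc) : Prop :=
  ¬ Bisim P .nil ∧ ∀ Q R, Bisim P (.par Q R) → Bisim Q .nil ∨ Bisim R .nil

/-! ### Auxiliary development -/

namespace MixedEqAux

/-- Weight of a label. -/
def lw : Lab → ℕ
  | .act _ => 1
  | .tau => 2

lemma lw_pos (μ : Lab) : 0 < lw μ := by cases μ <;> simp [lw]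

lemma step_size {P μ P'} (h : Step P μ P') : P.size = P'.size + lw μ := by
  induction h with
  | pre η P => simp [Proc.size, lw, Nat.add_comm]
  | syn h1 h2 ih1 ih2 => simp [Proc.size, lw] at *; omega
  | parL Q h ih => simp [Proc.size, lw] at *; omega
  | parR P h ih => simp [Proc.size, lw] at *; omega

lemma no_step_of_size_zero {P μ P'} (h : P.size = 0) : ¬ Step P μ P' := by
  intro hs
  have := step_size hs
  have := lw_pos μ
  omega

lemma exists_act_step {P : Proc} (h : 0 < P.size) :
    ∃ a P', Step P (.act a) P' := by
  induction P with
  | nil => simp [Proc.size] at h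
  | pre η Q ih => exact ⟨η, Q, Step.pre η Q⟩
  | par Q R ihQ ihR =>
    simp only [Proc.size] at h
    rcases (fun n => (Nat.eq_zero_or_pos n).symm) Q.size with hq | hq
    · obtain ⟨a, P', hs⟩ := ihQ hq
      exact ⟨a, _, Step.parL _ hs⟩
    · obtain ⟨a, P', hs⟩ := ihR (by omega)
      exact ⟨a, _, Step.parR _ hs⟩

lemma act_step_size {P a P'} (h : Step P (.act a) P') : P.size = P'.size + 1 :=
  step_size h

@[simp] lemma co_co (a : Act) : a.co.co = a := by cases a <;> rfl

/-! ### Step inversion -/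

lemma step_pre_inv {η P μ X} (h : Step (.pre η P) μ X) : μ = .act η ∧ X = P := by
  cases h; exact ⟨rfl, rfl⟩

lemma step_par_inv {P Q μ X} (h : Step (.par P Q) μ X) :
    (∃ P', Step P μ P' ∧ X = .par P' Q) ∨
    (∃ Q', Step Q μ Q' ∧ X = .par P Q') ∨
    (∃ a P' Q', μ = .tau ∧ Step P (.act a) P' ∧ Step Q (.act a.co) Q' ∧ X = .par P' Q') := by
  cases h with
  | syn h1 h2 => exact Or.inr (Or.inr ⟨_, _, _, rfl, h1, h2, rfl⟩)
  | parL Q h => exact Or.inl ⟨_, h, rfl⟩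
  | parR P h => exact Or.inr (Or.inl ⟨_, h, rfl⟩)

lemma step_par_act_inv {P Q a X} (h : Step (.par P Q) (.act a) X) :
    (∃ P', Step P (.act a) P' ∧ X = .par P' Q) ∨
    (∃ Q', Step Q (.act a) Q' ∧ X = .par P Q') := by
  rcases step_par_inv h with h' | h' | ⟨a', P', Q', habs, _⟩
  · exact Or.inl h'
  · exact Or.inr h'
  · cases habs

/-! ### Parametric bisimilarity -/

/-- A simulation relation matching only the labels satisfying `W`. -/
def IsSim (W : Lab → Prop) (R : Proc → Proc → Prop) : Prop :=
  (∀ P Q, R P Q → R Q P) ∧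
  ∀ P Q μ P', W μ → R P Q → Step P μ P' → ∃ Q', Step Q μ Q' ∧ R P' Q'

def GB (W : Lab → Prop) (P Q : Proc) : Prop := ∃ R, IsSim W R ∧ R P Q

/-- Labels other than τ. -/
def WA : Lab → Prop := fun μ => μ ≠ .tau

/-- All labels. -/
def WF : Lab → Prop := fun _ => True

lemma WA_act (a : Act) : WA (.act a) := by simp [WA]
lemma WF_act (a : Act) : WF (.act a) := trivial

lemma bisim_iff_gb {P Q} : Bisim P Q ↔ GB WF P Q := by
  constructor
  · rintro ⟨R, ⟨h1, h2⟩, hR⟩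
    exact ⟨R, ⟨h1, fun P Q μ P' _ => h2 P Q μ P'⟩, hR⟩
  · rintro ⟨R, ⟨h1, h2⟩, hR⟩
    exact ⟨R, ⟨h1, fun P Q μ P' => h2 P Q μ P' trivial⟩, hR⟩

lemma gb_mono {W W' : Lab → Prop} (h : ∀ μ, W' μ → W μ) {P Q} :
    GB W P Q → GB W' P Q := by
  rintro ⟨R, ⟨h1, h2⟩, hR⟩
  exact ⟨R, ⟨h1, fun P Q μ P' hW => h2 P Q μ P' (h μ hW)⟩, hR⟩

variable {W : Lab → Prop}

lemma gb_refl (P : Proc) : GB W P P := by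
  refine ⟨Eq, ⟨fun _ _ h => h.symm, ?_⟩, rfl⟩
  rintro P Q μ P' _ rfl h
  exact ⟨P', h, rfl⟩

lemma gb_symm {P Q} (h : GB W P Q) : GB W Q P := by
  obtain ⟨R, hR, hPQ⟩ := h
  exact ⟨R, hR, hR.1 _ _ hPQ⟩

lemma gb_unfold {P Q μ P'} (h : GB W P Q) (hW : W μ) (hs : Step P μ P') :
    ∃ Q', Step Q μ Q' ∧ GB W P' Q' := by
  obtain ⟨R, hR, hPQ⟩ := h
  obtain ⟨Q', hsQ, hR'⟩ := hR.2 _ _ _ _ hW hPQ hs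
  exact ⟨Q', hsQ, ⟨R, hR, hR'⟩⟩

lemma gb_is_sim : IsSim W (GB W) :=
  ⟨fun _ _ => gb_symm, fun _ _ _ _ hW h hs => gb_unfold h hW hs⟩

lemma gb_trans {P Q R} (h1 : GB W P Q) (h2 : GB W Q R) : GB W P R := by
  refine ⟨fun X Z => ∃ Y, GB W X Y ∧ GB W Y Z, ⟨?_, ?_⟩, Q, h1, h2⟩
  · rintro X Z ⟨Y, hXY, hYZ⟩
    exact ⟨Y, gb_symm hYZ, gb_symm hXY⟩
  · rintro X Z μ X' hW ⟨Y, hXY, hYZ⟩ hs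
    obtain ⟨Y', hsY, hXY'⟩ := gb_unfold hXY hW hs
    obtain ⟨Z', hsZ, hYZ'⟩ := gb_unfold hYZ hW hsY
    exact ⟨Z', hsZ, Y', hXY', hYZ'⟩

/-! ### SC is a bisimulation -/

lemma sc_step_aux : ∀ {P Q}, SC P Q →
    (∀ μ P', Step P μ P' → ∃ Q', Step Q μ Q' ∧ SC P' Q') ∧
    (∀ μ Q', Step Q μ Q' → ∃ P', Step P μ P' ∧ SC P' Q') := by
  intro P Q h
  induction h with
  | refl P => exact ⟨fun μ P' h => ⟨P', h, SC.refl _⟩, fun μ Q' h => ⟨Q', h, SC.refl _⟩⟩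
  | symm h ih =>
    refine ⟨fun μ P' hs => ?_, fun μ Q' hs => ?_⟩
    · obtain ⟨Q', h1, h2⟩ := ih.2 μ P' hs
      exact ⟨Q', h1, h2.symm⟩
    · obtain ⟨P', h1, h2⟩ := ih.1 μ Q' hs
      exact ⟨P', h1, h2.symm⟩
  | trans h1 h2 ih1 ih2 =>
    refine ⟨fun μ P' hs => ?_, fun μ Q' hs => ?_⟩
    · obtain ⟨Y, hY, sY⟩ := ih1.1 μ P' hs
      obtain ⟨Z, hZ, sZ⟩ := ih2.1 μ Y hY
      exact ⟨Z, hZ, sY.trans sZ⟩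
    · obtain ⟨Y, hY, sY⟩ := ih2.2 μ Q' hs
      obtain ⟨Z, hZ, sZ⟩ := ih1.2 μ Y hY
      exact ⟨Z, hZ, sZ.trans sY⟩
  | comm P Q =>
    have key : ∀ A B μ X, Step (.par A B) μ X → ∃ Y, Step (.par B A) μ Y ∧ SC X Y := by
      intro A B μ X hs
      cases hs with
      | parL _ h => exact ⟨_, Step.parR _ h, SC.comm _ _⟩
      | parR _ h => exact ⟨_, Step.parL _ h, SC.comm _ _⟩
      | syn h1 h2 =>
        refine ⟨_, Step.syn h2 ?_, SC.comm _ _⟩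
        rw [co_co]; exact h1
    exact ⟨key P Q, fun μ Q' hs => by
      obtain ⟨Y, h1, h2⟩ := key Q P μ Q' hs
      exact ⟨Y, h1, h2.symm⟩⟩
  | assoc P Q R =>
    constructor
    · intro μ X hs
      cases hs with
      | parL _ h => exact ⟨_, Step.parL _ (Step.parL _ h), SC.assoc _ _ _⟩
      | parR _ h =>
        cases h with
        | parL _ h' => exact ⟨_, Step.parL _ (Step.parR _ h'), SC.assoc _ _ _⟩
        | parR _ h' => exact ⟨_, Step.parR _ h', SC.assoc _ _ _⟩
        | syn h1 h2 => exact ⟨_, Step.syn (Step.parR _ h1) h2, SC.assoc _ _ _⟩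
      | syn h1 h2 =>
        cases h2 with
        | parL _ h' => exact ⟨_, Step.parL _ (Step.syn h1 h'), SC.assoc _ _ _⟩
        | parR _ h' => exact ⟨_, Step.syn (Step.parL _ h1) h', SC.assoc _ _ _⟩
    · intro μ X hs
      cases hs with
      | parL _ h =>
        cases h with
        | parL _ h' => exact ⟨_, Step.parL _ h', SC.assoc _ _ _⟩
        | parR _ h' => exact ⟨_, Step.parR _ (Step.parL _ h'), SC.assoc _ _ _⟩
        | syn h1 h2 => exact ⟨_, Step.syn h1 (Step.parL _ h2), SC.assoc _ _ _⟩
      | parR _ h => exact ⟨_, Step.parR _ (Step.parR _ h), SC.assoc _ _ _⟩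
      | syn h1 h2 =>
        cases h1 with
        | parL _ h' => exact ⟨_, Step.syn h' (Step.parR _ h2), SC.assoc _ _ _⟩
        | parR _ h' => exact ⟨_, Step.parR _ (Step.syn h' h2), SC.assoc _ _ _⟩
  | unit P =>
    constructor
    · intro μ X hs
      cases hs with
      | parL _ h => exact ⟨_, h, SC.unit _⟩
      | parR _ h => cases h
      | syn h1 h2 => cases h2
    · intro μ X hs
      exact ⟨_, Step.parL _ hs, SC.unit _⟩
  | pre η h ih =>
    constructor
    · intro μ X hs
      obtain ⟨rfl, rfl⟩ := step_pre_inv hs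
      exact ⟨_, Step.pre _ _, h⟩
    · intro μ X hs
      obtain ⟨rfl, rfl⟩ := step_pre_inv hs
      exact ⟨_, Step.pre _ _, h⟩
  | par h1 h2 ih1 ih2 =>
    constructor
    · intro μ X hs
      cases hs with
      | parL _ h =>
        obtain ⟨Y, hY, sY⟩ := ih1.1 _ _ h
        exact ⟨_, Step.parL _ hY, SC.par sY h2⟩
      | parR _ h =>
        obtain ⟨Y, hY, sY⟩ := ih2.1 _ _ h
        exact ⟨_, Step.parR _ hY, SC.par h1 sY⟩
      | syn ha hb =>
        obtain ⟨Y1, hY1, sY1⟩ := ih1.1 _ _ ha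
        obtain ⟨Y2, hY2, sY2⟩ := ih2.1 _ _ hb
        exact ⟨_, Step.syn hY1 hY2, SC.par sY1 sY2⟩
    · intro μ X hs
      cases hs with
      | parL _ h =>
        obtain ⟨Y, hY, sY⟩ := ih1.2 _ _ h
        exact ⟨_, Step.parL _ hY, SC.par sY h2⟩
      | parR _ h =>
        obtain ⟨Y, hY, sY⟩ := ih2.2 _ _ h
        exact ⟨_, Step.parR _ hY, SC.par h1 sY⟩
      | syn ha hb =>
        obtain ⟨Y1, hY1, sY1⟩ := ih1.2 _ _ ha
        obtain ⟨Y2, hY2, sY2⟩ := ih2.2 _ _ hb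
        exact ⟨_, Step.syn hY1 hY2, SC.par sY1 sY2⟩

lemma sc_step {P Q μ P'} (h : SC P Q) (hs : Step P μ P') :
    ∃ Q', Step Q μ Q' ∧ SC P' Q' := (sc_step_aux h).1 μ P' hs

lemma gb_of_sc {P Q} (h : SC P Q) : GB W P Q := by
  refine ⟨SC, ⟨fun _ _ h => h.symm, ?_⟩, h⟩
  intro P Q μ P' _ hPQ hs
  exact sc_step hPQ hs

/-! ### Congruence properties -/

lemma gb_parL {P Q} (R0 : Proc) (h : GB W P Q) (hWa : ∀ a, W (.act a)) :
    GB W (.par P R0) (.par Q R0) := by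
  refine ⟨fun X Y => ∃ A B C, X = .par A C ∧ Y = .par B C ∧ GB W A B,
    ⟨?_, ?_⟩, P, Q, R0, rfl, rfl, h⟩
  · rintro X Y ⟨A, B, C, rfl, rfl, hAB⟩
    exact ⟨B, A, C, rfl, rfl, gb_symm hAB⟩
  · rintro X Y μ X' hW ⟨A, B, C, rfl, rfl, hAB⟩ hs
    cases hs with
    | parL _ h' =>
      obtain ⟨B', hsB, hAB'⟩ := gb_unfold hAB hW h'
      exact ⟨_, Step.parL _ hsB, _, _, _, rfl, rfl, hAB'⟩
    | parR _ h' =>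
      exact ⟨_, Step.parR _ h', _, _, _, rfl, rfl, hAB⟩
    | syn ha hb =>
      obtain ⟨B', hsB, hAB'⟩ := gb_unfold hAB (hWa _) ha
      exact ⟨_, Step.syn hsB hb, _, _, _, rfl, rfl, hAB'⟩

lemma gb_par2 {P Q P' Q'} (h1 : GB W P Q) (h2 : GB W P' Q') (hWa : ∀ a, W (.act a)) :
    GB W (.par P P') (.par Q Q') := by
  have s1 : GB W (.par P P') (.par Q P') := gb_parL _ h1 hWa
  have s2 : GB W (.par Q P') (.par P' Q) := gb_of_sc (SC.comm _ _)
  have s3 : GB W (.par P' Q) (.par Q' Q) := gb_parL _ h2 hWa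
  have s4 : GB W (.par Q' Q) (.par Q Q') := gb_of_sc (SC.comm _ _)
  exact gb_trans (gb_trans (gb_trans s1 s2) s3) s4

lemma gb_pre {P Q} (η : Act) (h : GB W P Q) : GB W (.pre η P) (.pre η Q) := by
  refine ⟨fun X Y => (∃ A B, X = .pre η A ∧ Y = .pre η B ∧ GB W A B) ∨ GB W X Y,
    ⟨?_, ?_⟩, Or.inl ⟨P, Q, rfl, rfl, h⟩⟩
  · rintro X Y (⟨A, B, rfl, rfl, hAB⟩ | hXY)
    · exact Or.inl ⟨B, A, rfl, rfl, gb_symm hAB⟩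
    · exact Or.inr (gb_symm hXY)
  · rintro X Y μ X' hW (⟨A, B, rfl, rfl, hAB⟩ | hXY) hs
    · obtain ⟨rfl, rfl⟩ := step_pre_inv hs
      exact ⟨B, Step.pre _ _, Or.inr hAB⟩
    · obtain ⟨Y', hsY, hXY'⟩ := gb_unfold hXY hW hs
      exact ⟨Y', hsY, Or.inr hXY'⟩

/-! ### Size and bisimilarity -/

lemma gb_nil_of_size {P} (h : P.size = 0) : GB W P .nil := by
  refine ⟨fun X Y => X.size = 0 ∧ Y.size = 0, ⟨fun _ _ h => ⟨h.2, h.1⟩, ?_⟩, h, rfl⟩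
  rintro X Y μ X' _ ⟨hX, hY⟩ hs
  exact absurd hs (no_step_of_size_zero hX)

lemma gb_size (hWa : ∀ a, W (.act a)) : ∀ n P Q, P.size ≤ n → GB W P Q → P.size = Q.size := by
  intro n
  induction n with
  | zero =>
    intro P Q hP h
    rcases (fun n => (Nat.eq_zero_or_pos n).symm) Q.size with hq | hq
    · obtain ⟨a, Q', hs⟩ := exists_act_step hq
      obtain ⟨P', hsP, _⟩ := gb_unfold (gb_symm h) (hWa a) hs
      have := act_step_size hsP
      omega
    · omega
  | succ n ih =>
    intro P Q hP h
    rcases (fun n => (Nat.eq_zero_or_pos n).symm) P.size with hp | hp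
    · obtain ⟨a, P', hs⟩ := exists_act_step hp
      obtain ⟨Q', hsQ, h'⟩ := gb_unfold h (hWa a) hs
      have e1 := act_step_size hs
      have e2 := act_step_size hsQ
      have := ih P' Q' (by omega) h'
      omega
    · rcases (fun n => (Nat.eq_zero_or_pos n).symm) Q.size with hq | hq
      · obtain ⟨a, Q', hs⟩ := exists_act_step hq
        obtain ⟨P', hsP, _⟩ := gb_unfold (gb_symm h) (hWa a) hs
        have := act_step_size hsP
        omega
      · omega

lemma gb_size_eq (hWa : ∀ a, W (.act a)) {P Q} (h : GB W P Q) : P.size = Q.size :=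
  gb_size hWa P.size P Q le_rfl h

lemma gb_nil_iff (hWa : ∀ a, W (.act a)) {P} : GB W P .nil ↔ P.size = 0 := by
  constructor
  · intro h
    have := gb_size_eq hWa h
    simpa [Proc.size] using this
  · exact gb_nil_of_size

end MixedEqAux

namespace MixedEqAux

/-! ### Components and list products -/

def listProd : List Proc → Proc
  | [] => .nil
  | P :: l => .par P (listProd l)

def comps : Proc → List Proc
  | .nil => []
  | .pre η P => [.pre η P]
  | .par P Q => comps P ++ comps Q

lemma comps_shape {P c} (h : c ∈ comps P) : ∃ η B, c = .pre η B := by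
  induction P with
  | nil => simp [comps] at h
  | pre η B ih => simp [comps] at h; exact ⟨η, B, h⟩
  | par Q R ihQ ihR =>
    simp only [comps, List.mem_append] at h
    rcases h with h | h
    · exact ihQ h
    · exact ihR h

lemma sc_listProd_append (l₁ l₂ : List Proc) :
    SC (listProd (l₁ ++ l₂)) (.par (listProd l₁) (listProd l₂)) := by
  induction l₁ with
  | nil =>
    simp only [List.nil_append, listProd]
    exact (SC.trans (SC.comm _ _) (SC.unit _)).symm
  | cons c l ih =>
    simp only [List.cons_append, listProd]
    exact SC.trans (SC.par (SC.refl c) ih) (SC.assoc _ _ _)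

lemma sc_comps (P : Proc) : SC P (listProd (comps P)) := by
  induction P with
  | nil => exact SC.refl _
  | pre η B ih => exact (SC.unit _).symm
  | par Q R ihQ ihR =>
    exact SC.trans (SC.par ihQ ihR) (sc_listProd_append _ _).symm

lemma listProd_sc_forall₂ {l₁ l₂ : List Proc} (h : List.Forall₂ SC l₁ l₂) :
    SC (listProd l₁) (listProd l₂) := by
  induction h with
  | nil => exact SC.refl _
  | cons h _ ih => exact SC.par h ih

lemma listProd_sc_perm {l₁ l₂ : List Proc} (h : l₁.Perm l₂) :
    SC (listProd l₁) (listProd l₂) := by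
  induction h with
  | nil => exact SC.refl _
  | cons x _ ih => exact SC.par (SC.refl _) ih
  | swap x y l =>
    exact SC.trans (SC.assoc _ _ _)
      (SC.trans (SC.par (SC.comm _ _) (SC.refl _)) (SC.assoc _ _ _).symm)
  | trans _ _ ih1 ih2 => exact SC.trans ih1 ih2

/-- The relation between prefixed components induced by `SC`. -/
def SCP (c d : Proc) : Prop := ∃ η B B', c = .pre η B ∧ d = .pre η B' ∧ SC B B'

lemma scp_symm {c d} (h : SCP c d) : SCP d c := by
  obtain ⟨η, B, B', rfl, rfl, h⟩ := h
  exact ⟨η, B', B, rfl, rfl, h.symm⟩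

lemma scp_trans {c d e} (h1 : SCP c d) (h2 : SCP d e) : SCP c e := by
  obtain ⟨η, B, B', rfl, rfl, h1⟩ := h1
  obtain ⟨η', C, C', he, rfl, h2⟩ := h2
  obtain ⟨rfl, rfl⟩ : η' = η ∧ C = B' := by
    constructor <;> { injection he with h1 h2; simp [h1.symm, h2.symm] }
  exact ⟨_, B, C', rfl, rfl, h1.trans h2⟩

lemma scp_sc {c d} (h : SCP c d) : SC c d := by
  obtain ⟨η, B, B', rfl, rfl, h⟩ := h
  exact SC.pre η h

lemma scp_refl_comps {P c} (h : c ∈ comps P) : SCP c c := by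
  obtain ⟨η, B, rfl⟩ := comps_shape h
  exact ⟨η, B, B, rfl, rfl, SC.refl B⟩

lemma rel_scp_trans {s t u : Multiset Proc}
    (h1 : Multiset.Rel SCP s t) (h2 : Multiset.Rel SCP t u) : Multiset.Rel SCP s u := by
  induction h1 generalizing u with
  | zero =>
    rw [Multiset.rel_zero_left] at h2
    subst h2; exact Multiset.Rel.zero
  | @cons a b as bs hab _ ih =>
    rw [Multiset.rel_cons_left] at h2
    obtain ⟨c, u', hbc, hrel, rfl⟩ := h2
    exact Multiset.Rel.cons (scp_trans hab hbc) (ih hrel)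

lemma rel_refl_append {l₁ l₂ : List Proc}
    (h : ∀ c ∈ l₁, SCP c c) (e : (↑l₁ : Multiset Proc) = ↑l₂) :
    Multiset.Rel SCP (↑l₁) (↑l₂) := by
  rw [← e]
  exact Multiset.rel_refl_of_refl_on (fun c hc => h c (by simpa using hc))

theorem sc_comps_rel {P Q} (h : SC P Q) :
    Multiset.Rel SCP (↑(comps P)) (↑(comps Q)) := by
  induction h with
  | refl P => exact Multiset.rel_refl_of_refl_on (fun c hc => scp_refl_comps (by simpa using hc))
  | symm h ih => exact (Multiset.rel_flip.2 ih).mono (fun a _ b _ hab => scp_symm hab)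
  | trans h1 h2 ih1 ih2 => exact rel_scp_trans ih1 ih2
  | comm P Q =>
    show Multiset.Rel SCP (↑(comps P ++ comps Q)) (↑(comps Q ++ comps P))
    refine rel_refl_append ?_ (Multiset.coe_eq_coe.2 List.perm_append_comm)
    intro c hc
    rcases List.mem_append.1 hc with hc | hc <;> exact scp_refl_comps hc
  | assoc P Q R =>
    show Multiset.Rel SCP (↑(comps P ++ (comps Q ++ comps R)))
      (↑((comps P ++ comps Q) ++ comps R))
    refine rel_refl_append ?_ (by rw [List.append_assoc])
    intro c hc
    simp only [List.mem_append] at hc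
    rcases hc with hc | hc | hc <;> exact scp_refl_comps hc
  | unit P =>
    refine rel_refl_append ?_ (by simp [comps])
    intro c hc
    simp only [comps, List.append_nil] at hc
    exact scp_refl_comps hc
  | pre η' h ih =>
    exact Multiset.Rel.cons ⟨η', _, _, rfl, rfl, h⟩ Multiset.Rel.zero
  | par h1 h2 ih1 ih2 =>
    show Multiset.Rel SCP (↑(comps _ ++ comps _)) (↑(comps _ ++ comps _))
    rw [← Multiset.coe_add, ← Multiset.coe_add]
    exact Multiset.Rel.add ih1 ih2

lemma sc_comps_nil {P Q} (h : SC P Q) (hP : comps P = []) : comps Q = [] := by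
  have := sc_comps_rel h
  rw [hP] at this
  have : (↑(comps Q) : Multiset Proc) = 0 := by
    rw [show ((↑([] : List Proc)) : Multiset Proc) = 0 from rfl] at this
    exact Multiset.rel_zero_left.1 this
  simpa using this

lemma sc_of_comps_nil {P} (h : comps P = []) : SC P .nil := by
  have := sc_comps P
  rw [h] at this
  exact this

lemma sc_of_single_comp {P c} (h : comps P = [c]) : SC P c := by
  have := sc_comps P
  rw [h] at this
  exact this.trans (SC.unit c)

lemma sc_pre_pre {η₁ η₂ B₁ B₂} (h : SC (.pre η₁ B₁) (.pre η₂ B₂)) :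
    η₁ = η₂ ∧ SC B₁ B₂ := by
  have := sc_comps_rel h
  rw [show comps (.pre η₁ B₁) = [Proc.pre η₁ B₁] from rfl,
    show comps (.pre η₂ B₂) = [Proc.pre η₂ B₂] from rfl] at this
  rw [show ((↑([Proc.pre η₁ B₁] : List Proc)) : Multiset Proc) = Proc.pre η₁ B₁ ::ₘ 0 by rfl,
    Multiset.rel_cons_left] at this
  obtain ⟨b, bs', hscp, hrel, heq⟩ := this
  rw [Multiset.rel_zero_left] at hrel
  subst hrel
  have hb : b = Proc.pre η₂ B₂ := by
    have h2 : (Proc.pre η₂ B₂) ∈ (↑([Proc.pre η₂ B₂] : List Proc) : Multiset Proc) := by simp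
    rw [heq] at h2
    exact ((Multiset.mem_cons.1 h2).resolve_right (by simp)).symm
  subst hb
  obtain ⟨η, B, B', he1, he2, hsc⟩ := hscp
  injection he1 with e1 e2; injection he2 with e3 e4
  subst e1; subst e2; subst e3; subst e4
  exact ⟨rfl, hsc⟩

/-- If `X` is structurally congruent to a prefix, its components form a singleton
related to that prefix. -/
lemma sc_to_pre {X η B} (h : SC X (.pre η B)) :
    ∃ B', comps X = [.pre η B'] ∧ SC B' B := by
  have hrel := sc_comps_rel h.symm
  rw [show comps (.pre η B) = [Proc.pre η B] from rfl,
    show ((↑([Proc.pre η B] : List Proc)) : Multiset Proc) = Proc.pre η B ::ₘ 0 by rfl,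
    Multiset.rel_cons_left] at hrel
  obtain ⟨b, bs', hscp, hrel, heq⟩ := hrel
  rw [Multiset.rel_zero_left] at hrel
  subst hrel
  obtain ⟨η', C, C', he1, rfl, hsc⟩ := hscp
  injection he1 with e1 e2
  subst e1; subst e2
  have : comps X = [Proc.pre η C'] := by
    have : (↑(comps X) : Multiset Proc) = ↑([Proc.pre η C'] : List Proc) := by
      rw [heq]; rfl
    rw [Multiset.coe_eq_coe, List.perm_singleton] at this
    exact this
  exact ⟨C', this, hsc.symm⟩

lemma size_listProd (l : List Proc) : (listProd l).size = (l.map Proc.size).sum := by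
  induction l with
  | nil => rfl
  | cons c l ih => simp [listProd, Proc.size, ih]

end MixedEqAux

namespace MixedEqAux

/-! ### The measure `mu` and sizes under rewriting -/

def mu : Proc → ℕ
  | .nil => 0
  | .pre _ P => 2 * mu P + 1
  | .par P Q => mu P + mu Q

lemma mu_pow (P : Proc) : ∀ k, mu (pow P k) = k * mu P
  | 0 => by simp [pow, mu]
  | k+1 => by simp [pow, mu, mu_pow P k]; ring

lemma size_pow (P : Proc) : ∀ k, (pow P k).size = k * P.size
  | 0 => by simp [pow, Proc.size]
  | k+1 => by simp [pow, Proc.size, size_pow P k]; ring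

lemma sc_mu {P Q} (h : SC P Q) : mu P = mu Q := by
  induction h with
  | refl P => rfl
  | symm h ih => omega
  | trans h1 h2 ih1 ih2 => omega
  | comm P Q => simp [mu]; omega
  | assoc P Q R => simp [mu]; omega
  | unit P => simp [mu]
  | pre η h ih => simp [mu]; omega
  | par h1 h2 ih1 ih2 => simp [mu]; omega

lemma sc_size {P Q} (h : SC P Q) : P.size = Q.size := by
  induction h with
  | refl P => rfl
  | symm h ih => omega
  | trans h1 h2 ih1 ih2 => omega
  | comm P Q => simp [Proc.size]; omega
  | assoc P Q R => simp [Proc.size]; omega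
  | unit P => simp [Proc.size]
  | pre η h ih => simp [Proc.size]; omega
  | par h1 h2 ih1 ih2 => simp [Proc.size]; omega

lemma rw_mu {P P'} (h : RW P P') : mu P' < mu P := by
  induction h with
  | @head η B k hk =>
    simp only [mu, mu_pow]
    have : 0 ≤ mu B := Nat.zero_le _
    nlinarith [mu_pow (Proc.pre η B) k]
  | pre η h ih => simp [mu]; omega
  | parL Q h ih => simp [mu]; omega
  | parR P h ih => simp [mu]; omega
  | congr h1 h2 h3 ih =>
    have e1 := sc_mu h1
    have e3 := sc_mu h3
    omega

lemma rw_size {P P'} (h : RW P P') : P.size = P'.size := by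
  induction h with
  | @head η B k hk =>
    simp only [Proc.size, size_pow]
    ring
  | pre η h ih => simp [Proc.size]; omega
  | parL Q h ih => simp [Proc.size]; omega
  | parR P h ih => simp [Proc.size]; omega
  | congr h1 h2 h3 ih =>
    have e1 := sc_size h1
    have e3 := sc_size h3
    omega

lemma rws_size {P P'} (h : Rws P P') : P.size = P'.size := by
  induction h with
  | refl => rfl
  | tail _ h ih => rw [ih, rw_size h]

/-! ### Steps of powers of a prefix -/

lemma pow_step_inv {η B} : ∀ {m μ X}, Step (pow (.pre η B) m) μ X →
    ∃ k, m = k + 1 ∧ μ = .act η ∧ SC X (.par B (pow (.pre η B) k)) := by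
  intro m
  induction m with
  | zero => intro μ X h; cases h
  | succ m ih =>
    intro μ X h
    rcases step_par_inv h with ⟨P', hP, rfl⟩ | ⟨Q', hQ, rfl⟩ | ⟨a, P', Q', rfl, hP, hQ, rfl⟩
    · obtain ⟨rfl, rfl⟩ := step_pre_inv hP
      exact ⟨m, rfl, rfl, SC.refl _⟩
    · obtain ⟨k, rfl, rfl, hsc⟩ := ih hQ
      refine ⟨k + 1, rfl, rfl, ?_⟩
      -- par (pre η B) Q'  SC  par B (par (pre η B) (pow k))
      refine SC.trans (SC.par (SC.refl _) hsc) ?_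
      exact SC.trans (SC.assoc _ _ _)
        (SC.trans (SC.par (SC.comm _ _) (SC.refl _)) (SC.assoc _ _ _).symm)
    · obtain ⟨he, _⟩ := step_pre_inv hP
      obtain ⟨k, _, he2, _⟩ := ih hQ
      exfalso
      injection he with e1
      injection he2 with e2
      subst e1
      cases a <;> simp [Act.co] at e2

/-! ### Soundness of the rewriting -/

lemma gb_of_rw {W} {P Q} (h : RW P Q) (hWa : ∀ a, W (.act a)) : GB W P Q := by
  induction h with
  | @head η B k hk =>
    refine ⟨fun X Y =>
      (X = .pre η (.par B (pow (.pre η B) k)) ∧ Y = pow (.pre η B) (k+1)) ∨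
      (Y = .pre η (.par B (pow (.pre η B) k)) ∧ X = pow (.pre η B) (k+1)) ∨ SC X Y,
      ⟨?_, ?_⟩, Or.inl ⟨rfl, rfl⟩⟩
    · rintro X Y (⟨rfl, rfl⟩ | ⟨rfl, rfl⟩ | h)
      · exact Or.inr (Or.inl ⟨rfl, rfl⟩)
      · exact Or.inl ⟨rfl, rfl⟩
      · exact Or.inr (Or.inr h.symm)
    · rintro X Y μ X' hW (⟨rfl, rfl⟩ | ⟨rfl, rfl⟩ | hsc) hs
      · obtain ⟨rfl, rfl⟩ := step_pre_inv hs
        refine ⟨.par B (pow (.pre η B) k), ?_, Or.inr (Or.inr (SC.refl _))⟩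
        exact Step.parL _ (Step.pre η B)
      · obtain ⟨k', hk', rfl, hsc⟩ := pow_step_inv hs
        have hkk : k' = k := by omega
        subst hkk
        exact ⟨_, Step.pre η _, Or.inr (Or.inr hsc)⟩
      · obtain ⟨Y', h1, h2⟩ := sc_step hsc hs
        exact ⟨Y', h1, Or.inr (Or.inr h2)⟩
  | pre η h ih => exact gb_pre η ih
  | parL Q h ih =>
    exact gb_par2 ih (gb_refl Q) hWa
  | parR P h ih =>
    exact gb_par2 (gb_refl P) ih hWa
  | congr h1 h2 h3 ih =>
    exact gb_trans (gb_of_sc h1) (gb_trans ih (gb_of_sc h3))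

lemma gb_of_rws {W} {P Q} (h : Rws P Q) (hWa : ∀ a, W (.act a)) : GB W P Q := by
  induction h with
  | refl => exact gb_refl _
  | tail _ h ih => exact gb_trans ih (gb_of_rw h hWa)

/-! ### Inversion of rewriting at a prefix -/

lemma rw_needs_prefix {P P'} (h : RW P P') : comps P ≠ [] := by
  induction h with
  | head hk => simp [comps]
  | pre η h ih => simp [comps]
  | parL Q h ih => simp only [comps]; intro hc; exact ih (List.append_eq_nil_iff.1 hc).1
  | parR P h ih => simp only [comps]; intro hc; exact ih (List.append_eq_nil_iff.1 hc).2
  | congr h1 h2 h3 ih =>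
    intro hc
    exact ih (sc_comps_nil h1 hc)

lemma rw_pre_inv {X X'} (h : RW X X') : ∀ η B, SC X (.pre η B) →
    (∃ B', RW B B' ∧ SC X' (.pre η B')) ∨
    (∃ R k, 1 ≤ k ∧ SC B (.par R (pow (.pre η R) k)) ∧ SC X' (pow (.pre η R) (k+1))) := by
  induction h with
  | @head η₀ P k hk =>
    intro η B hsc
    obtain ⟨rfl, hsc'⟩ := sc_pre_pre hsc
    exact Or.inr ⟨P, k, hk, hsc'.symm, SC.refl _⟩
  | @pre P P' η₀ h ih =>
    intro η B hsc
    obtain ⟨rfl, hsc'⟩ := sc_pre_pre hsc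
    exact Or.inl ⟨P', RW.congr hsc'.symm h (SC.refl _), SC.refl _⟩
  | @parL P P' Q h ih =>
    intro η B hsc
    obtain ⟨B₀, hcomps, hscB⟩ := sc_to_pre hsc
    simp only [comps] at hcomps
    have hQnil : comps Q = [] := by
      have hPne := rw_needs_prefix h
      rcases hP : comps P with _ | ⟨c, l⟩
      · exact absurd hP hPne
      · rw [hP] at hcomps
        have h3 : c = Proc.pre η B₀ ∧ l = [] ∧ comps Q = [] := by simpa using hcomps
        exact h3.2.2
    have hPc : comps P = [.pre η B₀] := by
      rw [hQnil, List.append_nil] at hcomps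
      exact hcomps
    have hscP : SC P (.pre η B) :=
      (sc_of_single_comp hPc).trans (SC.pre η hscB)
    have hscQ : SC Q .nil := sc_of_comps_nil hQnil
    have elim : ∀ Z, SC (Proc.par Z Q) Z := fun Z =>
      (SC.par (SC.refl Z) hscQ).trans (SC.unit Z)
    rcases ih η B hscP with ⟨B', hrw, hsc'⟩ | ⟨R, k, hk, h1, h2⟩
    · exact Or.inl ⟨B', hrw, (elim _).trans hsc'⟩
    · exact Or.inr ⟨R, k, hk, h1, (elim _).trans h2⟩
  | @parR Q Q' P h ih =>
    intro η B hsc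
    obtain ⟨B₀, hcomps, hscB⟩ := sc_to_pre hsc
    simp only [comps] at hcomps
    have hQne := rw_needs_prefix h
    have hPnil : comps P = [] := by
      rcases hP : comps P with _ | ⟨c, l⟩
      · rfl
      · exfalso
        rw [hP] at hcomps
        have h3 : c = Proc.pre η B₀ ∧ l = [] ∧ comps Q = [] := by simpa using hcomps
        exact hQne h3.2.2
    have hQc : comps Q = [.pre η B₀] := by
      rw [hPnil, List.nil_append] at hcomps
      exact hcomps
    have hscQ : SC Q (.pre η B) :=
      (sc_of_single_comp hQc).trans (SC.pre η hscB)
    have hscP : SC P .nil := sc_of_comps_nil hPnil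
    have elim : ∀ Z, SC (Proc.par P Z) Z := fun Z =>
      (SC.par hscP (SC.refl Z)).trans ((SC.comm _ _).trans (SC.unit Z))
    rcases ih η B hscQ with ⟨B', hrw, hsc'⟩ | ⟨R, k, hk, h1, h2⟩
    · exact Or.inl ⟨B', hrw, (elim _).trans hsc'⟩
    · exact Or.inr ⟨R, k, hk, h1, (elim _).trans h2⟩
  | @congr P P₁ P₂ P' h1 h2 h3 ih =>
    intro η B hsc
    rcases ih η B (h1.symm.trans hsc) with ⟨B', hrw, hsc'⟩ | ⟨R, k, hk, ha, hb⟩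
    · exact Or.inl ⟨B', hrw, h3.symm.trans hsc'⟩
    · exact Or.inr ⟨R, k, hk, ha, h3.symm.trans hb⟩

/-! ### Normal forms -/

lemma nf_sc {P Q} (h : SC P Q) (hP : NF P) : NF Q := by
  rintro ⟨X, hX⟩
  exact hP ⟨X, RW.congr h hX (SC.refl _)⟩

lemma nf_pre_body {η B} (h : NF (.pre η B)) : NF B := by
  rintro ⟨X, hX⟩
  exact h ⟨.pre η X, RW.pre η hX⟩

lemma nf_of_comps {P} (h : ∀ c ∈ comps P, NF c) : NF P := by
  rintro ⟨X, hX⟩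
  induction hX with
  | @head η B k hk =>
    exact h (Proc.pre η (Proc.par B (pow (Proc.pre η B) k)))
      (by simp [comps]) ⟨_, RW.head hk⟩
  | @pre P₀ P₀' η hrw ih =>
    exact h (Proc.pre η P₀) (by simp [comps]) ⟨_, RW.pre η hrw⟩
  | @parL P₀ P₀' Q₀ hrw ih =>
    exact ih (fun c hc => h c (by simp only [comps, List.mem_append]; exact Or.inl hc))
  | @parR Q₀ Q₀' P₀ hrw ih =>
    exact ih (fun c hc => h c (by simp only [comps, List.mem_append]; exact Or.inr hc))
  | @congr P₀ P₁ P₂ P₀' h1 h2 h3 ih =>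
    refine ih (fun c hc => ?_)
    have hrel := sc_comps_rel h1
    obtain ⟨d, hd, hscp⟩ :=
      Multiset.exists_mem_of_rel_of_mem (Multiset.rel_flip.2 hrel) (by simpa using hc)
    have hnf : NF d := h d (by simpa using hd)
    exact nf_sc (scp_sc (scp_symm hscp)).symm hnf

lemma nf_comp {P} (hP : NF P) : ∀ c ∈ comps P, NF c := by
  intro c hc
  rintro ⟨c', hc'⟩
  have hperm : (comps P).Perm (c :: (comps P).erase c) := List.perm_cons_erase hc
  have hsc : SC P (.par c (listProd ((comps P).erase c))) :=
    (sc_comps P).trans (listProd_sc_perm hperm)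
  exact hP ⟨_, RW.congr hsc (RW.parL _ hc') (SC.refl _)⟩

lemma comps_pow_pre {η A} : ∀ k, ∀ c ∈ comps (pow (.pre η A) k), c = Proc.pre η A := by
  intro k
  induction k with
  | zero => intro c hc; simp [pow, comps] at hc
  | succ k ih =>
    intro c hc
    simp only [pow, comps, List.mem_append] at hc
    rcases hc with hc | hc
    · simpa [comps] using hc
    · exact ih c hc

lemma nf_pow {η A} (h : NF (.pre η A)) (k : ℕ) : NF (pow (.pre η A) k) := by
  refine nf_of_comps (fun c hc => ?_)
  rw [comps_pow_pre k c hc]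
  exact h

/-! ### Normalization -/

lemma normalize : ∀ P, ∃ N, Rws P N ∧ NF N := by
  intro P
  generalize hn : mu P = n
  induction n using Nat.strong_induction_on generalizing P with
  | _ n ih =>
    by_cases hNF : NF P
    · exact ⟨P, Relation.ReflTransGen.refl, hNF⟩
    · simp only [NF, not_not] at hNF
      obtain ⟨P', hP'⟩ := hNF
      obtain ⟨N, hrws, hNF⟩ := ih (mu P') (by rw [← hn]; exact rw_mu hP') P' rfl
      exact ⟨N, Relation.ReflTransGen.head hP' hrws, hNF⟩

lemma normpre : ∀ η B,
    (∃ B', Rws (.pre η B) (.pre η B') ∧ NF (.pre η B')) ∨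
    (∃ R k, 1 ≤ k ∧ Rws (.pre η B) (pow (.pre η R) (k+1))) := by
  intro η B
  generalize hn : mu B = n
  induction n using Nat.strong_induction_on generalizing B with
  | _ n ih =>
    by_cases hNF : NF (.pre η B)
    · exact Or.inl ⟨B, Relation.ReflTransGen.refl, hNF⟩
    · simp only [NF, not_not] at hNF
      obtain ⟨X, hX⟩ := hNF
      rcases rw_pre_inv hX η B (SC.refl _) with ⟨B', hrw, hsc⟩ | ⟨R, k, hk, _, hsc⟩
      · have hstep : RW (.pre η B) (.pre η B') := RW.congr (SC.refl _) hX hsc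
        rcases ih (mu B') (by rw [← hn]; exact rw_mu hrw) B' rfl with
          ⟨B'', hrws, hNF'⟩ | ⟨R, k, hk, hrws⟩
        · exact Or.inl ⟨B'', Relation.ReflTransGen.head hstep hrws, hNF'⟩
        · exact Or.inr ⟨R, k, hk, Relation.ReflTransGen.head hstep hrws⟩
      · exact Or.inr ⟨R, k, hk,
          Relation.ReflTransGen.single (RW.congr (SC.refl _) hX hsc)⟩

end MixedEqAux

namespace MixedEqAux

/-! ### Cancellation for act-bisimilarity -/

/-- Act-bisimilarity: bisimilarity w.r.t. visible labels only. -/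
abbrev BA := GB WA

lemma cancel_chase (n : ℕ)
    (IH : ∀ m, m < n → ∀ P Q R0 : Proc, P.size + R0.size ≤ m →
      BA (.par P R0) (.par Q R0) → BA P Q) :
    ∀ m (P' Q R1 R2 : Proc) (a : Act), R2.size ≤ m → P'.size + R2.size + 1 ≤ n →
      BA (.par P' R1) (.par Q R2) → Step R1 (.act a) R2 →
      ∃ Q', Step Q (.act a) Q' ∧ BA P' Q' := by
  intro m
  induction m using Nat.strong_induction_on with
  | _ m ihm =>
    intro P' Q R1 R2 a hR2 hn hba hstep
    have hs : Step (.par P' R1) (.act a) (.par P' R2) := Step.parR _ hstep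
    obtain ⟨U, hU, hba'⟩ := gb_unfold hba (WA_act a) hs
    rcases step_par_act_inv hU with ⟨Q', hQ', rfl⟩ | ⟨R3, hR3, rfl⟩
    · exact ⟨Q', hQ', IH (P'.size + R2.size) (by omega) P' Q' R2 le_rfl hba'⟩
    · have h3 := act_step_size hR3
      exact ihm R3.size (by omega) P' Q R2 R3 a le_rfl (by omega) hba' hR3

lemma cancel : ∀ n (P Q R0 : Proc), P.size + R0.size ≤ n →
    BA (.par P R0) (.par Q R0) → BA P Q := by
  intro n
  induction n using Nat.strong_induction_on with
  | _ n IH =>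
    have key : ∀ (P Q R0 : Proc), P.size + R0.size ≤ n → BA (.par P R0) (.par Q R0) →
        ∀ a P', Step P (.act a) P' → ∃ Q', Step Q (.act a) Q' ∧ BA P' Q' := by
      intro P Q R0 hn hba a P' hstep
      have hs : Step (.par P R0) (.act a) (.par P' R0) := Step.parL _ hstep
      obtain ⟨U, hU, hba'⟩ := gb_unfold hba (WA_act a) hs
      have hP' := act_step_size hstep
      rcases step_par_act_inv hU with ⟨Q', hQ', rfl⟩ | ⟨R1, hR1, rfl⟩
      · exact ⟨Q', hQ', IH (P'.size + R0.size) (by omega) P' Q' R0 le_rfl hba'⟩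
      · have h1 := act_step_size hR1
        exact cancel_chase n (fun m hm => IH m hm) R1.size P' Q R0 R1 a le_rfl
          (by omega) hba' hR1
    intro P Q R0 hn hba
    have hsz : P.size = Q.size := by
      have := gb_size_eq WA_act hba
      simp only [Proc.size] at this
      omega
    refine ⟨fun X Y => BA X Y ∨ (X = P ∧ Y = Q) ∨ (X = Q ∧ Y = P),
      ⟨?_, ?_⟩, Or.inr (Or.inl ⟨rfl, rfl⟩)⟩
    · rintro X Y (h | ⟨rfl, rfl⟩ | ⟨rfl, rfl⟩)
      · exact Or.inl (gb_symm h)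
      · exact Or.inr (Or.inr ⟨rfl, rfl⟩)
      · exact Or.inr (Or.inl ⟨rfl, rfl⟩)
    · rintro X Y μ X' hW (h | ⟨rfl, rfl⟩ | ⟨rfl, rfl⟩) hs
      · obtain ⟨Y', h1, h2⟩ := gb_unfold h hW hs
        exact ⟨Y', h1, Or.inl h2⟩
      · obtain ⟨a, rfl⟩ : ∃ a, μ = .act a := by
          cases μ with
          | act a => exact ⟨a, rfl⟩
          | tau => exact absurd rfl hW
        obtain ⟨Q', h1, h2⟩ := key _ _ R0 hn hba a X' hs
        exact ⟨Q', h1, Or.inl h2⟩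
      · obtain ⟨a, rfl⟩ : ∃ a, μ = .act a := by
          cases μ with
          | act a => exact ⟨a, rfl⟩
          | tau => exact absurd rfl hW
        obtain ⟨Q', h1, h2⟩ := key _ _ R0 (by omega) (gb_symm hba) a X' hs
        exact ⟨Q', h1, Or.inl h2⟩

lemma cancel' {P Q R0 : Proc} (h : BA (.par P R0) (.par Q R0)) : BA P Q :=
  cancel (P.size + R0.size) P Q R0 le_rfl h

lemma cancelL {P Q R0 : Proc} (h : BA (.par R0 P) (.par R0 Q)) : BA P Q :=
  cancel' (gb_trans (gb_of_sc (SC.comm _ _)) (gb_trans h (gb_of_sc (SC.comm _ _))))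

/-! ### Act reachability -/

def AStep (P Q : Proc) : Prop := ∃ a, Step P (.act a) Q

def AReach : Proc → Proc → Prop := Relation.ReflTransGen AStep

lemma areach_size {P Q} (h : AReach P Q) : Q.size ≤ P.size := by
  induction h with
  | refl => exact le_rfl
  | tail _ h ih =>
    obtain ⟨a, hs⟩ := h
    have := act_step_size hs
    omega

lemma areach_eq_of_size {P Q} (h : AReach P Q) (hsz : P.size = Q.size) : P = Q := by
  rcases (Relation.ReflTransGen.cases_head h) with rfl | ⟨R, hPR, hRQ⟩
  · rfl
  · obtain ⟨a, hs⟩ := hPR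
    have h1 := act_step_size hs
    have h2 := areach_size hRQ
    omega

lemma gb_areach {X Y X₁} (h : BA X Y) (hr : AReach X X₁) :
    ∃ Y₁, AReach Y Y₁ ∧ BA X₁ Y₁ := by
  induction hr generalizing Y with
  | refl => exact ⟨Y, Relation.ReflTransGen.refl, h⟩
  | @tail b c _ hbc ih =>
    obtain ⟨Y₁, hr1, hba1⟩ := ih h
    obtain ⟨a, hs⟩ := hbc
    obtain ⟨Y₂, hs2, hba2⟩ := gb_unfold hba1 (WA_act a) hs
    exact ⟨Y₂, hr1.tail ⟨a, hs2⟩, hba2⟩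

lemma full_fire : ∀ P : Proc, ∃ Z, AReach P Z ∧ Z.size = 0 := by
  intro P
  generalize hn : P.size = n
  induction n using Nat.strong_induction_on generalizing P with
  | _ n ih =>
    rcases Nat.eq_zero_or_pos P.size with h0 | hpos
    · exact ⟨P, Relation.ReflTransGen.refl, h0⟩
    · obtain ⟨a, P', hs⟩ := exists_act_step hpos
      have := act_step_size hs
      obtain ⟨Z, hr, hz⟩ := ih P'.size (by omega) P' rfl
      exact ⟨Z, Relation.ReflTransGen.head ⟨a, hs⟩ hr, hz⟩

lemma areach_parR {P R1 R2} (h : AReach R1 R2) : AReach (.par P R1) (.par P R2) := by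
  induction h with
  | refl => exact Relation.ReflTransGen.refl
  | tail _ h ih =>
    obtain ⟨a, hs⟩ := h
    exact ih.tail ⟨a, Step.parR _ hs⟩

lemma areach_par_inv {U V W} (h : AReach (.par U V) W) :
    ∃ U' V', W = .par U' V' ∧ AReach U U' ∧ AReach V V' := by
  generalize hX : Proc.par U V = X at h
  induction h generalizing U V with
  | refl => exact ⟨U, V, hX.symm, Relation.ReflTransGen.refl, Relation.ReflTransGen.refl⟩
  | @tail b c hab hbc ih =>
    obtain ⟨U', V', rfl, h1, h2⟩ := ih hX
    obtain ⟨a, hs⟩ := hbc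
    rcases step_par_act_inv hs with ⟨U'', hU, rfl⟩ | ⟨V'', hV, rfl⟩
    · exact ⟨U'', V', rfl, h1.tail ⟨a, hU⟩, h2⟩
    · exact ⟨U', V'', rfl, h1, h2.tail ⟨a, hV⟩⟩

lemma areach_listProd_inv : ∀ (l : List Proc) (W : Proc), AReach (listProd l) W →
    ∃ l', W = listProd l' ∧ List.Forall₂ AReach l l' := by
  intro l
  induction l with
  | nil =>
    intro W h
    have : W = Proc.nil := by
      rcases Relation.ReflTransGen.cases_head h with rfl | ⟨R, hPR, _⟩
      · rfl
      · obtain ⟨a, hs⟩ := hPR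
        cases hs
    exact ⟨[], this, List.Forall₂.nil⟩
  | cons c l ih =>
    intro W h
    obtain ⟨U', V', rfl, h1, h2⟩ := areach_par_inv h
    obtain ⟨l', rfl, hall⟩ := ih V' h2
    exact ⟨U' :: l', rfl, List.Forall₂.cons h1 hall⟩

end MixedEqAux

namespace MixedEqAux

/-! ### Primes and unique decomposition for act-bisimilarity -/

def PrimeA (P : Proc) : Prop :=
  ¬ BA P .nil ∧ ∀ Q R, BA P (.par Q R) → BA Q .nil ∨ BA R .nil

lemma prime_pos_size {p} (h : PrimeA p) : 0 < p.size := by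
  rcases Nat.eq_zero_or_pos p.size with h0 | h1
  · exact absurd (gb_nil_of_size h0) h.1
  · exact h1

lemma prime_ba {p q} (h : BA p q) (hp : PrimeA p) : PrimeA q :=
  ⟨fun hq => hp.1 (gb_trans h hq),
   fun Q R hba => hp.2 Q R (gb_trans h hba)⟩

lemma ba_nil_parL {q X} (h : BA q .nil) : BA (.par q X) X :=
  gb_trans (gb_par2 h (gb_refl X) WA_act)
    (gb_trans (gb_of_sc (SC.comm _ _)) (gb_of_sc (SC.unit X)))

lemma ba_nil_parR {q X} (h : BA q .nil) : BA (.par X q) X :=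
  gb_trans (gb_par2 (gb_refl X) h WA_act) (gb_of_sc (SC.unit X))

lemma sum_zero_mem : ∀ l : List Proc, (l.map Proc.size).sum = 0 → ∀ x ∈ l, x.size = 0 := by
  intro l
  induction l with
  | nil => intro _ x hx; simp at hx
  | cons c l ih =>
    intro h x hx
    simp only [List.map_cons, List.sum_cons] at h
    rcases List.mem_cons.1 hx with rfl | hx
    · omega
    · exact ih (by omega) x hx

lemma listProd_nil_all {l} (h : BA (listProd l) .nil) : ∀ x ∈ l, BA x .nil := by
  intro x hx
  have hsz := gb_nil_iff WA_act |>.1 h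
  rw [size_listProd] at hsz
  exact gb_nil_of_size (sum_zero_mem l hsz x hx)

lemma prime_decomp : ∀ P : Proc, ∃ l : List Proc,
    (∀ p ∈ l, PrimeA p) ∧ BA P (listProd l) := by
  intro P
  generalize hn : P.size = n
  induction n using Nat.strong_induction_on generalizing P with
  | _ n ih =>
    subst hn
    rcases Nat.eq_zero_or_pos P.size with h0 | hpos
    · exact ⟨[], by simp, gb_nil_of_size h0⟩
    · by_cases hp : PrimeA P
      · refine ⟨[P], by simpa using hp, gb_of_sc (SC.unit P).symm⟩
      · have h1 : ¬ BA P .nil := fun h => by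
          have := gb_nil_iff WA_act |>.1 h
          omega
        have h2 : ¬ ∀ Q R, BA P (.par Q R) → BA Q .nil ∨ BA R .nil :=
          fun h => hp ⟨h1, h⟩
        push_neg at h2
        obtain ⟨Q, R, hba, hQ, hR⟩ := h2
        have hsz : P.size = Q.size + R.size := by
          have := gb_size_eq WA_act hba
          simpa [Proc.size] using this
        have hQpos : 0 < Q.size := by
          rcases Nat.eq_zero_or_pos Q.size with h | h
          · exact absurd (gb_nil_of_size h) hQ
          · exact h
        have hRpos : 0 < R.size := by
          rcases Nat.eq_zero_or_pos R.size with h | h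
          · exact absurd (gb_nil_of_size h) hR
          · exact h
        obtain ⟨lq, hlq, hbaq⟩ := ih Q.size (by omega) Q rfl
        obtain ⟨lr, hlr, hbar⟩ := ih R.size (by omega) R rfl
        refine ⟨lq ++ lr, ?_, ?_⟩
        · intro p hp'
          rcases List.mem_append.1 hp' with h | h
          · exact hlq p h
          · exact hlr p h
        · exact gb_trans hba (gb_trans (gb_par2 hbaq hbar WA_act)
            (gb_of_sc (sc_listProd_append _ _).symm))

lemma prime_group : ∀ (l : List Proc) (p : Proc), PrimeA p → BA p (listProd l) →
    ∃ l₁ r l₂, l = l₁ ++ r :: l₂ ∧ BA p r ∧ ∀ x ∈ l₁ ++ l₂, BA x .nil := by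
  intro l
  induction l with
  | nil => intro p hp hba; exact absurd hba hp.1
  | cons c l ih =>
    intro p hp hba
    rcases hp.2 c (listProd l) hba with hc | hl
    · obtain ⟨l₁, r, l₂, rfl, hbar, hnil⟩ := ih p hp (gb_trans hba (ba_nil_parL hc))
      refine ⟨c :: l₁, r, l₂, rfl, hbar, ?_⟩
      intro x hx
      rcases (by simpa using hx : x = c ∨ x ∈ l₁ ∨ x ∈ l₂) with rfl | hx' | hx'
      · exact hc
      · exact hnil x (List.mem_append.2 (Or.inl hx'))
      · exact hnil x (List.mem_append.2 (Or.inr hx'))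
    · refine ⟨[], c, l, rfl, gb_trans hba (ba_nil_parR hl), ?_⟩
      intro x hx
      exact listProd_nil_all hl x (by simpa using hx)

lemma exists_max_size : ∀ l : List Proc, l ≠ [] → ∃ p ∈ l, ∀ q ∈ l, q.size ≤ p.size := by
  intro l
  induction l with
  | nil => intro h; exact absurd rfl h
  | cons c l ih =>
    intro _
    rcases eq_or_ne l [] with rfl | hne
    · exact ⟨c, by simp, by simp⟩
    · obtain ⟨p, hp, hmax⟩ := ih hne
      rcases le_or_gt p.size c.size with h | h
      · refine ⟨c, by simp, ?_⟩
        intro q hq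
        rcases List.mem_cons.1 hq with rfl | hq
        · exact le_rfl
        · exact le_trans (hmax q hq) h
      · refine ⟨p, by simp [hp], ?_⟩
        intro q hq
        rcases List.mem_cons.1 hq with rfl | hq
        · exact le_of_lt h
        · exact hmax q hq

lemma forall₂_split {R : Proc → Proc → Prop} :
    ∀ (l₁ : List Proc) {qs r l₂}, List.Forall₂ R qs (l₁ ++ r :: l₂) →
    ∃ m₁ q m₂, qs = m₁ ++ q :: m₂ ∧ R q r ∧ List.Forall₂ R m₁ l₁ ∧ List.Forall₂ R m₂ l₂ := by
  intro l₁
  induction l₁ with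
  | nil =>
    intro qs r l₂ h
    rw [List.nil_append, List.forall₂_cons_right_iff] at h
    obtain ⟨q, m₂, hqr, hall, rfl⟩ := h
    exact ⟨[], q, m₂, rfl, hqr, List.Forall₂.nil, hall⟩
  | cons c l₁ ih =>
    intro qs r l₂ h
    rw [List.cons_append, List.forall₂_cons_right_iff] at h
    obtain ⟨q₀, qs', hq₀, hall, rfl⟩ := h
    obtain ⟨m₁, q, m₂, rfl, hqr, h1, h2⟩ := ih hall
    exact ⟨q₀ :: m₁, q, m₂, rfl, hqr, List.Forall₂.cons hq₀ h1, h2⟩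

theorem uniq : ∀ n (ps qs : List Proc), (ps.map Proc.size).sum ≤ n →
    (∀ p ∈ ps, PrimeA p) → (∀ q ∈ qs, PrimeA q) →
    BA (listProd ps) (listProd qs) → Multiset.Rel BA ↑ps ↑qs := by
  intro n
  induction n using Nat.strong_induction_on with
  | _ n IH =>
    -- the core argument, assuming the maximum is attained on the left side
    have core : ∀ ps qs : List Proc, (ps.map Proc.size).sum ≤ n →
        (∀ p ∈ ps, PrimeA p) → (∀ q ∈ qs, PrimeA q) →
        BA (listProd ps) (listProd qs) →
        (∃ p₁ ∈ ps, ∀ x ∈ ps ++ qs, x.size ≤ p₁.size) →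
        Multiset.Rel BA ↑ps ↑qs := by
      intro ps qs hn hps hqs hba ⟨p₁, hp₁, hmax⟩
      classical
      set rest := ps.erase p₁ with hrest
      have hperm : ps.Perm (p₁ :: rest) := List.perm_cons_erase hp₁
      have hsc : SC (listProd ps) (.par p₁ (listProd rest)) := listProd_sc_perm hperm
      obtain ⟨Z, hfz, hz0⟩ := full_fire (listProd rest)
      have hra : AReach (.par p₁ (listProd rest)) (.par p₁ Z) := areach_parR hfz
      have hba1 : BA (.par p₁ (listProd rest)) (listProd qs) :=
        gb_trans (gb_of_sc hsc.symm) hba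
      obtain ⟨W, hrw, hbaW⟩ := gb_areach hba1 hra
      obtain ⟨rs, rfl, hall⟩ := areach_listProd_inv qs W hrw
      have hzb : BA (.par p₁ Z) p₁ := ba_nil_parR (gb_nil_of_size hz0)
      have hbap : BA p₁ (listProd rs) := gb_trans (gb_symm hzb) hbaW
      have hp₁prime : PrimeA p₁ := hps p₁ hp₁
      obtain ⟨l₁, r, l₂, rfl, hbar, hnil⟩ := prime_group rs p₁ hp₁prime hbap
      obtain ⟨m₁, q₀, m₂, rfl, hq₀r, hm₁, hm₂⟩ := forall₂_split l₁ hall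
      -- q₀ reaches r, and r is act-bisimilar to p₁, with p₁ of maximal size
      have hsz_r : r.size = p₁.size := (gb_size_eq WA_act hbar).symm
      have hq₀mem : q₀ ∈ m₁ ++ q₀ :: m₂ := by simp
      have hq₀max : q₀.size ≤ p₁.size :=
        hmax q₀ (List.mem_append.2 (Or.inr hq₀mem))
      have hrq : r.size ≤ q₀.size := areach_size hq₀r
      have heq : q₀ = r := areach_eq_of_size hq₀r (by omega)
      subst heq
      have hbapq : BA p₁ q₀ := hbar
      -- cancellation
      have hpermq : (m₁ ++ q₀ :: m₂).Perm (q₀ :: (m₁ ++ m₂)) := List.perm_middle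
      have hba2 : BA (.par p₁ (listProd rest)) (.par q₀ (listProd (m₁ ++ m₂))) :=
        gb_trans hba1 (gb_of_sc (listProd_sc_perm hpermq))
      have hba3 : BA (.par p₁ (listProd rest)) (.par p₁ (listProd (m₁ ++ m₂))) :=
        gb_trans hba2 (gb_par2 (gb_symm hbapq) (gb_refl _) WA_act)
      have hba4 : BA (listProd rest) (listProd (m₁ ++ m₂)) := cancelL hba3
      -- fuel
      have hsum : ((ps : List Proc).map Proc.size).sum
          = p₁.size + ((rest.map Proc.size).sum) := by
        have := (hperm.map Proc.size).sum_eq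
        simpa using this
      have hp₁pos : 0 < p₁.size := prime_pos_size hp₁prime
      have hrel : Multiset.Rel BA ↑rest ↑(m₁ ++ m₂) := by
        refine IH ((rest.map Proc.size).sum) (by omega) rest (m₁ ++ m₂) le_rfl ?_ ?_ hba4
        · intro p hp'
          exact hps p (List.mem_of_mem_erase hp')
        · intro q hq'
          refine hqs q ?_
          rcases List.mem_append.1 hq' with h | h
          · exact List.mem_append.2 (Or.inl h)
          · exact List.mem_append.2 (Or.inr (List.mem_cons_of_mem _ h))
      have e1 : (↑ps : Multiset Proc) = p₁ ::ₘ ↑rest := by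
        rw [Multiset.coe_eq_coe.2 hperm]; rfl
      have e2 : (↑(m₁ ++ q₀ :: m₂) : Multiset Proc) = q₀ ::ₘ ↑(m₁ ++ m₂) := by
        rw [Multiset.coe_eq_coe.2 hpermq]; rfl
      rw [e1, e2]
      exact Multiset.Rel.cons hbapq hrel
    intro ps qs hn hps hqs hba
    rcases eq_or_ne ps [] with rfl | hpne
    · have : ∀ q ∈ qs, BA q .nil := listProd_nil_all (gb_symm hba)
      rcases eq_or_ne qs [] with rfl | hqne
      · exact Multiset.Rel.zero
      · obtain ⟨q, hq⟩ := List.exists_mem_of_ne_nil qs hqne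
        exact absurd (this q hq) (hqs q hq).1
    · rcases eq_or_ne qs [] with rfl | hqne
      · have : ∀ p ∈ ps, BA p .nil := listProd_nil_all hba
        obtain ⟨p, hp⟩ := List.exists_mem_of_ne_nil ps hpne
        exact absurd (this p hp) (hps p hp).1
      · obtain ⟨x, hx, hxmax⟩ := exists_max_size (ps ++ qs) (by simp [hpne])
        rcases List.mem_append.1 hx with hxp | hxq
        · exact core ps qs hn hps hqs hba ⟨x, hxp, hxmax⟩
        · have hn' : (qs.map Proc.size).sum ≤ n := by
            have e : (ps.map Proc.size).sum = (qs.map Proc.size).sum := by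
              have := gb_size_eq WA_act hba
              rwa [size_listProd, size_listProd] at this
            omega
          have hrel := core qs ps hn' hqs hps (gb_symm hba)
            ⟨x, hxq, fun y hy => hxmax y (by
              rcases List.mem_append.1 hy with h | h
              · exact List.mem_append.2 (Or.inr h)
              · exact List.mem_append.2 (Or.inl h))⟩
          exact (Multiset.rel_flip.2 hrel).mono (fun a _ b _ hab => gb_symm hab)

end MixedEqAux

namespace MixedEqAux

lemma gb_pow {u v : Proc} (h : BA u v) : ∀ k, BA (pow u k) (pow v k)
  | 0 => gb_refl _
  | k+1 => gb_par2 h (gb_pow h k) WA_act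

lemma listProd_ba_pow {v : Proc} : ∀ {l : List Proc}, (∀ q ∈ l, BA q v) →
    BA (listProd l) (pow v l.length) := by
  intro l
  induction l with
  | nil => intro _; exact gb_refl _
  | cons c l ih =>
    intro h
    exact gb_par2 (h c (by simp)) (ih (fun q hq => h q (by simp [hq]))) WA_act

lemma sc_pow_add (X : Proc) : ∀ a b, SC (.par (pow X a) (pow X b)) (pow X (a+b)) := by
  intro a
  induction a with
  | zero =>
    intro b
    have e : 0 + b = b := by omega
    rw [e]
    exact (SC.comm _ _).trans (SC.unit _)
  | succ a ih =>
    intro b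
    show SC (.par (.par X (pow X a)) (pow X b)) (pow X (a+1+b))
    have e : a + 1 + b = (a + b) + 1 := by omega
    rw [e]
    exact SC.trans (SC.assoc X (pow X a) (pow X b)).symm (SC.par (SC.refl X) (ih b))

lemma sc_pow_mul (X : Proc) : ∀ a b, SC (pow (pow X a) b) (pow X (a * b)) := by
  intro a b
  induction b with
  | zero => simp [pow, Nat.mul_zero]; exact SC.refl _
  | succ b ih =>
    show SC (.par (pow X a) (pow (pow X a) b)) (pow X (a * (b+1)))
    have e : a * (b + 1) = a + a * b := by ring
    rw [e]
    exact SC.trans (SC.par (SC.refl _) ih) (sc_pow_add X a (a*b))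

lemma erase_cons_cons_perm (p q : Proc) (r : List Proc) :
    ((p :: q :: r).erase q).Perm (p :: r) := by
  classical
  have h1 : (p :: q :: r).Perm (q :: ((p :: q :: r).erase q)) :=
    List.perm_cons_erase (by simp)
  have h2 : (p :: q :: r).Perm (q :: p :: r) := List.Perm.swap q p r
  exact (h1.symm.trans h2).cons_inv

theorem mixed_pow {η : Act} {P0 Q Q' : Proc} (h : BA (.pre η P0) (.par Q Q'))
    (hQ : ¬ BA Q .nil) (hQ' : ¬ BA Q' .nil) :
    ∃ A k, 2 ≤ k ∧ BA (.pre η P0) (pow (.pre η A) k) := by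
  classical
  obtain ⟨lq, hlq, hbq⟩ := prime_decomp Q
  obtain ⟨lq', hlq', hbq'⟩ := prime_decomp Q'
  set L : List Proc := lq ++ lq' with hL
  have hbL : BA (.pre η P0) (listProd L) :=
    gb_trans h (gb_trans (gb_par2 hbq hbq' WA_act)
      (gb_of_sc (sc_listProd_append _ _).symm))
  have hLp : ∀ p ∈ L, PrimeA p := by
    intro p hp
    rcases List.mem_append.1 hp with h' | h'
    · exact hlq p h'
    · exact hlq' p h'
  have hlqne : lq ≠ [] := by
    rintro rfl
    exact hQ hbq
  have hlq'ne : lq' ≠ [] := by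
    rintro rfl
    exact hQ' hbq'
  have hlen : 2 ≤ L.length := by
    have h1 : 1 ≤ lq.length := List.length_pos_iff.2 hlqne
    have h2 : 1 ≤ lq'.length := List.length_pos_iff.2 hlq'ne
    simp only [hL, List.length_append]
    omega
  -- every visible step of a component has label η and leads (in context) to P0
  have deriv_eq : ∀ p ∈ L, ∀ a x, Step p (.act a) x →
      a = η ∧ BA P0 (.par x (listProd (L.erase p))) := by
    intro p hp a x hs
    have hperm : L.Perm (p :: L.erase p) := List.perm_cons_erase hp
    have hstep : Step (.par p (listProd (L.erase p))) (.act a)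
        (.par x (listProd (L.erase p))) := Step.parL _ hs
    have hba' : BA (.par p (listProd (L.erase p))) (.pre η P0) :=
      gb_trans (gb_of_sc (listProd_sc_perm hperm).symm) (gb_symm hbL)
    obtain ⟨Y, hsY, hba2⟩ := gb_unfold hba' (WA_act a) hstep
    obtain ⟨he, rfl⟩ := step_pre_inv hsY
    injection he with he'
    exact ⟨he', gb_symm hba2⟩
  -- every component is act-bisimilar to a prefix
  have mk_pre : ∀ p ∈ L, ∃ x, Step p (.act η) x ∧ BA p (.pre η x) ∧
      BA P0 (.par x (listProd (L.erase p))) := by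
    intro p hp
    obtain ⟨a, x, hs⟩ := exists_act_step (prime_pos_size (hLp p hp))
    obtain ⟨hae, hP0⟩ := deriv_eq p hp a x hs
    rw [hae] at hs
    have hall : ∀ b y, Step p (.act b) y → b = η ∧ BA y x := by
      intro b y hsy
      obtain ⟨hbe, hP0'⟩ := deriv_eq p hp b y hsy
      exact ⟨hbe, cancel' (gb_trans (gb_symm hP0') hP0)⟩
    refine ⟨x, hs, ?_, hP0⟩
    refine ⟨fun X Y => (X = p ∧ Y = .pre η x) ∨ (Y = p ∧ X = .pre η x) ∨ BA X Y,
      ⟨?_, ?_⟩, Or.inl ⟨rfl, rfl⟩⟩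
    · rintro X Y (⟨rfl, rfl⟩ | ⟨rfl, rfl⟩ | h')
      · exact Or.inr (Or.inl ⟨rfl, rfl⟩)
      · exact Or.inl ⟨rfl, rfl⟩
      · exact Or.inr (Or.inr (gb_symm h'))
    · rintro X Y μ X' hW (⟨rfl, rfl⟩ | ⟨rfl, rfl⟩ | h') hs'
      · obtain ⟨b, rfl⟩ : ∃ b, μ = .act b := by
          cases μ with
          | act b => exact ⟨b, rfl⟩
          | tau => exact absurd rfl hW
        obtain ⟨hbe, hBA⟩ := hall b X' hs'
        refine ⟨x, ?_, Or.inr (Or.inr hBA)⟩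
        rw [hbe]
        exact Step.pre η x
      · obtain ⟨rfl, hx⟩ := step_pre_inv hs'
        refine ⟨x, hs, Or.inr (Or.inr ?_)⟩
        rw [hx]
        exact gb_refl x
      · obtain ⟨Y', h1, h2⟩ := gb_unfold h' hW hs'
        exact ⟨Y', h1, Or.inr (Or.inr h2)⟩
  -- fix the head component
  obtain ⟨p₁, hp₁⟩ := List.exists_mem_of_ne_nil L (by
    intro hnil
    rw [hnil] at hlen
    simp at hlen)
  obtain ⟨x₁, hs₁, hpre₁, hP0₁⟩ := mk_pre p₁ hp₁
  -- all components are act-bisimilar to `pre η x₁`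
  have claim : ∀ q ∈ L, BA q (.pre η x₁) := by
    intro q hqL
    by_cases hqp : q = p₁
    · subst hqp
      exact hpre₁
    · have hq : q ∈ L.erase p₁ := List.mem_erase_of_ne hqp |>.2 hqL
      obtain ⟨xq, hsq, hpreq, hP0q⟩ := mk_pre q hqL
      -- structural bookkeeping
      set rest1 := L.erase p₁ with hrest1
      set rest2 := rest1.erase q with hrest2
      have hperm1 : rest1.Perm (q :: rest2) := List.perm_cons_erase hq
      have hpermL : L.Perm (p₁ :: q :: rest2) :=
        (List.perm_cons_erase hp₁).trans (List.Perm.cons p₁ hperm1)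
      have hpermLq : (L.erase q).Perm (p₁ :: rest2) :=
        ((hpermL.erase q)).trans (erase_cons_cons_perm p₁ q rest2)
      -- the two equations for P0
      have h1 : BA P0 (.par x₁ (.par q (listProd rest2))) :=
        gb_trans hP0₁ (gb_par2 (gb_refl x₁) (gb_of_sc (listProd_sc_perm hperm1)) WA_act)
      have h2 : BA P0 (.par xq (.par p₁ (listProd rest2))) :=
        gb_trans hP0q (gb_par2 (gb_refl xq) (gb_of_sc (listProd_sc_perm hpermLq)) WA_act)
      have h3 : BA (.par (.par x₁ q) (listProd rest2))
          (.par (.par xq p₁) (listProd rest2)) :=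
        gb_trans (gb_of_sc (SC.assoc _ _ _).symm)
          (gb_trans (gb_symm h1) (gb_trans h2 (gb_of_sc (SC.assoc _ _ _))))
      have h4 : BA (.par x₁ q) (.par xq p₁) := cancel' h3
      have keyeq : BA (.par x₁ (.pre η xq)) (.par xq (.pre η x₁)) :=
        gb_trans (gb_par2 (gb_refl x₁) (gb_symm hpreq) WA_act)
          (gb_trans h4 (gb_par2 (gb_refl xq) hpre₁ WA_act))
      -- decompose the derivatives into primes
      obtain ⟨rs, hrs, hbars⟩ := prime_decomp x₁
      obtain ⟨ss, hss, hbass⟩ := prime_decomp xq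
      have hprime_vq : PrimeA (.pre η xq) := prime_ba hpreq (hLp q hqL)
      have hprime_v₁ : PrimeA (.pre η x₁) := prime_ba hpre₁ (hLp p₁ hp₁)
      have bleft : BA (listProd (rs ++ [.pre η xq])) (.par x₁ (.pre η xq)) :=
        gb_trans (gb_of_sc (sc_listProd_append rs [.pre η xq]))
          (gb_par2 (gb_symm hbars) (gb_of_sc (SC.unit _)) WA_act)
      have bright : BA (listProd (ss ++ [.pre η x₁])) (.par xq (.pre η x₁)) :=
        gb_trans (gb_of_sc (sc_listProd_append ss [.pre η x₁]))
          (gb_par2 (gb_symm hbass) (gb_of_sc (SC.unit _)) WA_act)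
      have hba5 : BA (listProd (rs ++ [.pre η xq])) (listProd (ss ++ [.pre η x₁])) :=
        gb_trans bleft (gb_trans keyeq (gb_symm bright))
      have hrel := uniq ((rs ++ [Proc.pre η xq]).map Proc.size).sum
        (rs ++ [Proc.pre η xq]) (ss ++ [Proc.pre η x₁]) le_rfl
        (by
          intro p hp'
          rcases List.mem_append.1 hp' with h' | h'
          · exact hrs p h'
          · simp only [List.mem_singleton] at h'
            subst h'
            exact hprime_vq)
        (by
          intro p hp'
          rcases List.mem_append.1 hp' with h' | h'
          · exact hss p h'
          · simp only [List.mem_singleton] at h'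
            subst h'
            exact hprime_v₁)
        hba5
      -- find the partner of `pre η x₁`
      have hmem : (Proc.pre η x₁) ∈ (↑(ss ++ [Proc.pre η x₁]) : Multiset Proc) := by
        simp
      obtain ⟨b, hbmem, hbba⟩ :=
        Multiset.exists_mem_of_rel_of_mem (Multiset.rel_flip.2 hrel) hmem
      have hbmem' : b ∈ rs ++ [Proc.pre η xq] := by simpa using hbmem
      have hb1 : BA b (.pre η x₁) := hbba
      rcases List.mem_append.1 hbmem' with hbrs | hbq
      · exfalso
        have hb_le : b.size ≤ (rs.map Proc.size).sum :=
          List.single_le_sum (by intro y _; exact Nat.zero_le y) _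
            (List.mem_map_of_mem (f := Proc.size) hbrs)
        have h6 : (rs.map Proc.size).sum = x₁.size := by
          have := gb_size_eq WA_act hbars
          rw [size_listProd] at this
          omega
        have h7 : b.size = x₁.size + 1 := by
          have := gb_size_eq WA_act hb1
          simpa [Proc.size, Nat.add_comm] using this
        omega
      · simp only [List.mem_singleton] at hbq
        subst hbq
        exact gb_trans hpreq hb1
  exact ⟨x₁, L.length, hlen, gb_trans hbL (listProd_ba_pow claim)⟩

end MixedEqAux

namespace MixedEqAux

lemma comps_size_le {P c} (h : c ∈ comps P) : c.size ≤ P.size := by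
  induction P with
  | nil => simp [comps] at h
  | pre η B ih =>
    simp only [comps, List.mem_singleton] at h
    subst h
    exact le_rfl
  | par Q R ihQ ihR =>
    simp only [comps, List.mem_append] at h
    rcases h with h | h
    · have := ihQ h
      simp only [Proc.size]
      omega
    · have := ihR h
      simp only [Proc.size]
      omega

lemma sc_listProd_of_rel : ∀ (l₁ l₂ : List Proc),
    Multiset.Rel SC ↑l₁ ↑l₂ → SC (listProd l₁) (listProd l₂) := by
  intro l₁
  induction l₁ with
  | nil =>
    intro l₂ h
    have : (↑l₂ : Multiset Proc) = 0 := Multiset.rel_zero_left.1 h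
    have : l₂ = [] := by simpa using this
    subst this
    exact SC.refl _
  | cons c l₁ ih =>
    intro l₂ h
    have h' : Multiset.Rel SC (c ::ₘ ↑l₁) ↑l₂ := h
    rw [Multiset.rel_cons_left] at h'
    obtain ⟨d, t', hcd, hrel, ht⟩ := h'
    have hdmem : d ∈ l₂ := by
      have : d ∈ (↑l₂ : Multiset Proc) := by rw [ht]; exact Multiset.mem_cons_self _ _
      simpa using this
    have ht' : t' = ↑(l₂.erase d) := by
      have e1 : (↑l₂ : Multiset Proc).erase d = t' := by rw [ht]; exact Multiset.erase_cons_head _ _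
      rw [← e1, Multiset.coe_erase]
    subst ht'
    have hscrest : SC (listProd l₁) (listProd (l₂.erase d)) := ih _ hrel
    have hperm : l₂.Perm (d :: l₂.erase d) := List.perm_cons_erase hdmem
    exact SC.trans (SC.par hcd hscrest) (listProd_sc_perm hperm).symm

theorem comp_nf : ∀ n, ∀ N M : Proc, N.size ≤ n → NF N → NF M → BA N M → SC N M := by
  intro n
  induction n using Nat.strong_induction_on with
  | _ n IH =>
    -- a power of a strictly smaller prefix cannot be act-bisimilar to an NF prefix
    have pow_lemma : ∀ nb (B A : Proc) (ηx : Act) (m : ℕ), B.size ≤ nb →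
        (Proc.pre ηx A).size ≤ n → NF (.pre ηx A) →
        2 ≤ m → BA (.pre ηx A) (pow (.pre ηx B) m) → False := by
      intro nb
      induction nb using Nat.strong_induction_on with
      | _ nb ihb =>
        intro B A ηx m hnb hsz hnf hm hba
        rcases normpre ηx B with ⟨B₀, hrws, hnf₀⟩ | ⟨R, k, hk, hrws⟩
        · have hpre0 : BA (.pre ηx B) (.pre ηx B₀) := gb_of_rws hrws WA_act
          have hba2 : BA (.pre ηx A) (pow (.pre ηx B₀) m) :=
            gb_trans hba (gb_pow hpre0 m)
          obtain ⟨W, hsW, hbaW⟩ := gb_unfold hba2 (WA_act ηx) (Step.pre ηx A)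
          obtain ⟨k', hk', he, hscW⟩ := pow_step_inv hsW
          have hbaA : BA A (.par B₀ (pow (.pre ηx B₀) k')) :=
            gb_trans hbaW (gb_of_sc hscW)
          have hk'1 : 1 ≤ k' := by omega
          have hnfV : NF (.par B₀ (pow (.pre ηx B₀) k')) := by
            refine nf_of_comps ?_
            intro c hc
            simp only [comps, List.mem_append] at hc
            rcases hc with hc | hc
            · exact nf_comp (nf_pre_body hnf₀) c hc
            · rw [comps_pow_pre k' c hc]
              exact hnf₀
          have hnfA : NF A := nf_pre_body hnf
          have hAsize : A.size < n := by
            simp only [Proc.size] at hsz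
            omega
          have hscA : SC A (.par B₀ (pow (.pre ηx B₀) k')) :=
            IH A.size hAsize A _ le_rfl hnfA hnfV hbaA
          exact hnf ⟨_, RW.congr (SC.pre ηx hscA) (RW.head hk'1) (SC.refl _)⟩
        · have h1 : BA (.pre ηx B) (pow (.pre ηx R) (k+1)) := gb_of_rws hrws WA_act
          have hba2 : BA (.pre ηx A) (pow (.pre ηx R) ((k+1) * m)) :=
            gb_trans hba (gb_trans (gb_pow h1 m) (gb_of_sc (sc_pow_mul _ _ _)))
          have hsz2 := rws_size hrws
          rw [size_pow] at hsz2
          simp only [Proc.size] at hsz2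
          -- hsz2 : 1 + B.size = (k+1) * (1 + R.size)
          have hmul : 2 * (1 + R.size) ≤ (k+1) * (1 + R.size) :=
            Nat.mul_le_mul_right _ (by omega)
          have hRsize : R.size < B.size := by omega
          have hm2 : 2 ≤ (k+1) * m := le_trans hm (Nat.le_mul_of_pos_left m (by omega))
          exact ihb R.size (by omega) R A ηx ((k+1)*m) le_rfl hsz hnf hm2 hba2
    -- NF prefixes of size ≤ n are prime
    have prime_of_nf : ∀ (ηc : Act) (Ac : Proc), (Proc.pre ηc Ac).size ≤ n →
        NF (.pre ηc Ac) → PrimeA (.pre ηc Ac) := by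
      intro ηc Ac hsz hnf
      constructor
      · intro hnil
        have := gb_nil_iff WA_act |>.1 hnil
        simp [Proc.size] at this
      · intro U V hUV
        by_contra hcon
        push_neg at hcon
        obtain ⟨hU, hV⟩ := hcon
        obtain ⟨x, m, hm, hpow⟩ := mixed_pow hUV hU hV
        exact pow_lemma x.size x Ac ηc m le_rfl hsz hnf hm hpow
    intro N M hszN hnfN hnfM hba
    have hszM : M.size = N.size := (gb_size_eq WA_act hba).symm
    have hcsN : ∀ c ∈ comps N, PrimeA c := by
      intro c hc
      obtain ⟨ηc, Ac, rfl⟩ := comps_shape hc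
      exact prime_of_nf ηc Ac (le_trans (comps_size_le hc) hszN) (nf_comp hnfN _ hc)
    have hcsM : ∀ c ∈ comps M, PrimeA c := by
      intro c hc
      obtain ⟨ηc, Ac, rfl⟩ := comps_shape hc
      exact prime_of_nf ηc Ac (le_trans (comps_size_le hc) (by omega)) (nf_comp hnfM _ hc)
    have hbaP : BA (listProd (comps N)) (listProd (comps M)) :=
      gb_trans (gb_of_sc (sc_comps N).symm) (gb_trans hba (gb_of_sc (sc_comps M)))
    have hrel := uniq (((comps N).map Proc.size).sum) (comps N) (comps M) le_rfl
      hcsN hcsM hbaP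
    have hrel2 : Multiset.Rel SC ↑(comps N) ↑(comps M) := by
      refine hrel.mono ?_
      intro c hc d hd hba'
      obtain ⟨ηc, Ac, rfl⟩ := comps_shape (show _ ∈ comps N by simpa using hc)
      obtain ⟨ηd, Ad, rfl⟩ := comps_shape (show _ ∈ comps M by simpa using hd)
      obtain ⟨Y, hsY, hbaY⟩ := gb_unfold hba' (WA_act ηc) (Step.pre ηc Ac)
      obtain ⟨he, hYAd⟩ := step_pre_inv hsY
      injection he with he'
      rw [hYAd] at hbaY
      have hsizeAc : Ac.size < n := by
        have h1 := comps_size_le (show Proc.pre ηc Ac ∈ comps N by simpa using hc)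
        simp only [Proc.size] at h1
        omega
      have hnfAc : NF Ac :=
        nf_pre_body (nf_comp hnfN _ (show Proc.pre ηc Ac ∈ comps N by simpa using hc))
      have hnfAd : NF Ad :=
        nf_pre_body (nf_comp hnfM _ (show Proc.pre ηd Ad ∈ comps M by simpa using hd))
      have hscbody : SC Ac Ad := IH Ac.size hsizeAc Ac Ad le_rfl hnfAc hnfAd hbaY
      rw [← he']
      exact SC.pre ηc hscbody
    exact SC.trans (sc_comps N)
      (SC.trans (sc_listProd_of_rel _ _ hrel2) (sc_comps M).symm)

end MixedEqAux

namespace MixedEqAux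

lemma min_pow {η : Act} {P0 : Proc} : ∀ nmu (A : Proc) (k : ℕ), mu (.pre η A) ≤ nmu → 2 ≤ k →
    BA (.pre η P0) (pow (.pre η A) k) →
    ∃ A' k', 2 ≤ k' ∧ BA (.pre η P0) (pow (.pre η A') k') ∧ NF (.pre η A') := by
  intro nmu
  induction nmu using Nat.strong_induction_on with
  | _ nmu ih =>
    intro A k hmu hk hba
    by_cases hnf : NF (.pre η A)
    · exact ⟨A, k, hk, hba, hnf⟩
    · simp only [NF, not_not] at hnf
      obtain ⟨X, hX⟩ := hnf
      rcases rw_pre_inv hX η A (SC.refl _) with ⟨A', hrw, hsc⟩ | ⟨R, k₂, hk₂, hscB, hscX⟩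
      · have hb : BA (.pre η A) (.pre η A') :=
          gb_trans (gb_of_rw hX WA_act) (gb_of_sc hsc)
        have hmuA : mu A' < mu A := rw_mu hrw
        have hmu' : mu (.pre η A') < mu (.pre η A) := by
          simp only [mu]
          omega
        exact ih (mu (.pre η A')) (by omega) A' k le_rfl hk
          (gb_trans hba (gb_pow hb k))
      · have hb : BA (.pre η A) (pow (.pre η R) (k₂+1)) :=
          gb_trans (gb_of_rw hX WA_act) (gb_of_sc hscX)
        have hba2 : BA (.pre η P0) (pow (.pre η R) ((k₂+1) * k)) :=
          gb_trans hba (gb_trans (gb_pow hb k) (gb_of_sc (sc_pow_mul _ _ _)))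
        have hmuR : mu (.pre η R) < mu (.pre η A) := by
          have h1 := sc_mu hscB
          simp only [mu, mu_pow] at h1 ⊢
          -- h1 : mu A = mu R + k₂ * (2 * mu R + 1)
          have h2 : 1 * (2 * mu R + 1) ≤ k₂ * (2 * mu R + 1) :=
            Nat.mul_le_mul_right _ hk₂
          omega
        have hk2 : 2 ≤ (k₂+1) * k :=
          le_trans hk (Nat.le_mul_of_pos_left k (by omega))
        exact ih (mu (.pre η R)) (by omega) R ((k₂+1)*k) le_rfl hk2 hba2

end MixedEqAux
/-- if a prefixed process is bisimilar to a nontrivial parallel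
    composition, then it is bisimilar to a power `(η.A)^k`, `k > 1`, with
    `η.A` in normal form. -/
theorem mixed_equation {η : Act} {P Q Q' : Proc}
    (h : Bisim (.pre η P) (.par Q Q'))
    (hQ : ¬ Bisim Q .nil) (hQ' : ¬ Bisim Q' .nil) :
    ∃ (A : Proc) (k : ℕ), 1 < k ∧
      Bisim (.pre η P) (pow (.pre η A) k) ∧ NF (.pre η A) := by
  classical
  open MixedEqAux in
  have hba : MixedEqAux.BA (.pre η P) (.par Q Q') :=
    MixedEqAux.gb_mono (fun μ _ => trivial) ((MixedEqAux.bisim_iff_gb).1 h)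
  have hQ2 : ¬ MixedEqAux.BA Q .nil := by
    intro hh
    exact hQ ((MixedEqAux.bisim_iff_gb).2
      (MixedEqAux.gb_nil_of_size (MixedEqAux.gb_nil_iff MixedEqAux.WA_act |>.1 hh)))
  have hQ'2 : ¬ MixedEqAux.BA Q' .nil := by
    intro hh
    exact hQ' ((MixedEqAux.bisim_iff_gb).2
      (MixedEqAux.gb_nil_of_size (MixedEqAux.gb_nil_iff MixedEqAux.WA_act |>.1 hh)))
  obtain ⟨A0, k0, hk0, hba0⟩ := MixedEqAux.mixed_pow hba hQ2 hQ'2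
  obtain ⟨A, k, hk, hbaP, hnfA⟩ :=
    MixedEqAux.min_pow (MixedEqAux.mu (.pre η A0)) A0 k0 le_rfl hk0 hba0
  obtain ⟨N, hrws, hnfN⟩ := MixedEqAux.normalize (.pre η P)
  have hbaN : MixedEqAux.BA N (pow (.pre η A) k) :=
    MixedEqAux.gb_trans
      (MixedEqAux.gb_symm (MixedEqAux.gb_of_rws hrws MixedEqAux.WA_act)) hbaP
  have hnfpow : NF (pow (.pre η A) k) := MixedEqAux.nf_pow hnfA k
  have hsc : SC N (pow (.pre η A) k) :=
    MixedEqAux.comp_nf N.size N _ le_rfl hnfN hnfpow hbaN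
  refine ⟨A, k, by omega, ?_, hnfA⟩
  exact (MixedEqAux.bisim_iff_gb).2
    (MixedEqAux.gb_trans (MixedEqAux.gb_of_rws hrws MixedEqAux.WF_act)
      (MixedEqAux.gb_of_sc hsc))
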